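/- For every integer n ≥ 0 there exists a polynomial P_n in three variables with nonnegative integer coefficients such that, in K, μ^{(1)}_n · ∏_{k=1}^{n+1} [ν+k]_q^{⌊(n+1)/k⌋} = (Qq)^n · [ν+1]_q · P_n(q, Q, [ν]_q). Equivalently (Theorem 3.2): in the expansion J^{(1)}_{ν+1}((1−q)z;q)/J^{(1)}_ν((1−q)z;q) = ∑_{n≥1} (N^{(1)}_{n,ν}(q)/D_{n,ν}(q)) q^{(ν+1)(n−1)} (z/2)^{2n−1} with D_{n,ν}(q) = ∏_{k=1}^{n} [k+ν]_q^{⌊n/k⌋}, every numerator N^{(1)}_{n,ν}(q) is a polynomial in q, q^ν and [ν]_q with nonnegative integer coefficients. -/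

import Mathlib

/- Let `K` be the fraction field of `ℚ[q,Q]`, where `Q` plays the role of `q^ν`.
`θ1ν` and `θ1ν1` are the series `θ^{(1)}_ν` and `θ^{(1)}_{ν+1}` of Jackson's
`q`-Bessel function `J^{(1)}_ν`, and `μ1 n` are the coefficients of
`θ^{(1)}_{ν+1}/θ^{(1)}_ν`. -/

noncomputable section

abbrev K : Type := FractionRing (MvPolynomial (Fin 2) ℚ)

def qv : K := algebraMap (MvPolynomial (Fin 2) ℚ) K (MvPolynomial.X 0)

def Qv : K := algebraMap (MvPolynomial (Fin 2) ℚ) K (MvPolynomial.X 1)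

/-- The q-Pochhammer symbol `(a;q)_n`. -/
def qPoch (a : K) (n : ℕ) : K := ∏ j ∈ Finset.range n, (1 - a * qv ^ j)

/-- `[ν+k]_q = (1 - Q q^k)/(1-q)`. -/
def brk (k : ℕ) : K := (1 - Qv * qv ^ k) / (1 - qv)

/-- `[ν]_q = (1 - Q)/(1-q)`. -/
def brNu : K := (1 - Qv) / (1 - qv)

/-- `θ^{(1)}_ν(x)`. -/
def θ1ν : PowerSeries K :=
  PowerSeries.mk fun n =>
    (-1) ^ n * (1 - qv) ^ (2 * n) / (qPoch qv n * qPoch (Qv * qv) n)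

/-- `θ^{(1)}_{ν+1}(x)`. -/
def θ1ν1 : PowerSeries K :=
  PowerSeries.mk fun n =>
    (-1) ^ n * (1 - qv) ^ (2 * n) / (qPoch qv n * qPoch (Qv * qv ^ 2) n)

/-- The coefficients `μ^{(1)}_n` of `θ^{(1)}_{ν+1}(x)/θ^{(1)}_ν(x)`. -/
def μ1 (n : ℕ) : K := PowerSeries.coeff n (θ1ν1 * θ1ν⁻¹)

-- nonvanishing helpers
lemma one_sub_alg_ne (p : MvPolynomial (Fin 2) ℚ) (hp : MvPolynomial.constantCoeff p = 0) :
    (1 : K) - algebraMap (MvPolynomial (Fin 2) ℚ) K p ≠ 0 := by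
  have h1 : (1 : K) - algebraMap (MvPolynomial (Fin 2) ℚ) K p
      = algebraMap (MvPolynomial (Fin 2) ℚ) K (1 - p) := by
    rw [map_sub, map_one]
  rw [h1]
  intro h
  have h2 := (map_eq_zero_iff _ (IsFractionRing.injective (MvPolynomial (Fin 2) ℚ) K)).mp h
  apply_fun MvPolynomial.constantCoeff at h2
  simp [hp] at h2

lemma hq_ne : (1 : K) - qv ≠ 0 := by
  simpa [qv] using one_sub_alg_ne (MvPolynomial.X 0) (by simp)

lemma hqp_ne (t : ℕ) : (1 : K) - qv ^ (t + 1) ≠ 0 := by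
  have := one_sub_alg_ne (MvPolynomial.X 0 ^ (t + 1)) (by simp)
  simpa [qv, map_pow] using this

lemma hQqp_ne (t : ℕ) : (1 : K) - Qv * qv ^ t ≠ 0 := by
  have := one_sub_alg_ne (MvPolynomial.X 1 * MvPolynomial.X 0 ^ t) (by simp)
  simpa [qv, Qv, map_pow, map_mul] using this

lemma qPoch_q_ne (n : ℕ) : qPoch qv n ≠ 0 := by
  rw [qPoch, Finset.prod_ne_zero_iff]
  intro j _
  have : (1 : K) - qv * qv ^ j = 1 - qv ^ (j + 1) := by ring
  rw [this]; exact hqp_ne j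

lemma qPoch_Qq_ne (n : ℕ) : qPoch (Qv * qv) n ≠ 0 := by
  rw [qPoch, Finset.prod_ne_zero_iff]
  intro j _
  have : (1 : K) - Qv * qv * qv ^ j = 1 - Qv * qv ^ (j + 1) := by ring
  rw [this]; exact hQqp_ne (j + 1)

lemma qPoch_Qq2_ne (n : ℕ) : qPoch (Qv * qv ^ 2) n ≠ 0 := by
  rw [qPoch, Finset.prod_ne_zero_iff]
  intro j _
  have : (1 : K) - Qv * qv ^ 2 * qv ^ j = 1 - Qv * qv ^ (j + 2) := by ring
  rw [this]; exact hQqp_ne (j + 2)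

-- the key contiguous identity
lemma key (n : ℕ) :
    (1 - Qv * qv) * qPoch (Qv * qv ^ 2) n = (1 - Qv * qv * qv ^ n) * qPoch (Qv * qv) n := by
  have h1 : qPoch (Qv * qv) (n + 1) = qPoch (Qv * qv) n * (1 - Qv * qv * qv ^ n) :=
    Finset.prod_range_succ _ n
  have h2 : qPoch (Qv * qv) (n + 1)
      = (∏ j ∈ Finset.range n, (1 - Qv * qv * qv ^ (j + 1))) * (1 - Qv * qv * qv ^ 0) :=
    Finset.prod_range_succ' _ n
  have h3 : (∏ j ∈ Finset.range n, (1 - Qv * qv * qv ^ (j + 1))) = qPoch (Qv * qv ^ 2) n := by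
    refine Finset.prod_congr rfl fun j _ => by ring
  have h4 : (1 - Qv * qv * qv ^ 0) = 1 - Qv * qv := by ring
  rw [h3, h4] at h2
  rw [mul_comm, ← h2, h1, mul_comm]

open PowerSeries in
lemma relA : (C (1 - Qv * qv)) * θ1ν = θ1ν1 - (C (Qv * qv)) * rescale qv θ1ν1 := by
  ext n
  rw [coeff_C_mul, map_sub, coeff_C_mul, coeff_rescale]
  simp only [θ1ν, θ1ν1, coeff_mk]
  have hP := qPoch_q_ne n
  have hR := qPoch_Qq_ne n
  have hS := qPoch_Qq2_ne n
  field_simp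
  linear_combination ((1 - qv) ^ (2 * n)) * key n

open PowerSeries in
lemma relC : (C (1 - Qv * qv)) * (rescale qv θ1ν - θ1ν)
    = (C ((1 - qv) ^ 2)) * (X * θ1ν1) := by
  ext n
  rw [coeff_C_mul, map_sub, coeff_rescale, coeff_C_mul]
  cases n with
  | zero => simp [θ1ν]
  | succ n =>
    rw [coeff_succ_X_mul]
    simp only [θ1ν, θ1ν1, coeff_mk]
    have hP := qPoch_q_ne (n + 1)
    have hR := qPoch_Qq_ne (n + 1)
    have hS := qPoch_Qq2_ne n
    have hP' : qPoch qv (n + 1) = qPoch qv n * (1 - qv * qv ^ n) := Finset.prod_range_succ _ n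
    have hR' : qPoch (Qv * qv) (n + 1) = qPoch (Qv * qv) n * (1 - Qv * qv * qv ^ n) :=
      Finset.prod_range_succ _ n
    have hPn := qPoch_q_ne n
    have hRn := qPoch_Qq_ne n
    have h1 : (1 : K) - qv * qv ^ n ≠ 0 := by
      have : (1 : K) - qv * qv ^ n = 1 - qv ^ (n + 1) := by ring
      rw [this]; exact hqp_ne n
    have h2 : (1 : K) - Qv * qv * qv ^ n ≠ 0 := by
      have : (1 : K) - Qv * qv * qv ^ n = 1 - Qv * qv ^ (n + 1) := by ring
      rw [this]; exact hQqp_ne (n + 1)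
    rw [hP', hR']
    have hpow : (1 - qv) ^ (2 * (n + 1)) = (1 - qv) ^ (2 * n) * (1 - qv) ^ 2 := by
      rw [← pow_add]; ring_nf
    rw [hpow]
    field_simp
    linear_combination ((-1) ^ n * (1 - qv) ^ 2 * (1 - qv) ^ (2 * n) * (1 - qv * qv ^ n)) * key n

open PowerSeries in
lemma constA : constantCoeff θ1ν = 1 := by
  rw [← coeff_zero_eq_constantCoeff]
  simp [θ1ν, qPoch]

open PowerSeries in
lemma constA' : constantCoeff (rescale qv θ1ν) = 1 := by
  rw [← coeff_zero_eq_constantCoeff, coeff_rescale, pow_zero, one_mul,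
    coeff_zero_eq_constantCoeff, constA]

open PowerSeries in
lemma hAu : θ1ν * θ1ν⁻¹ = 1 :=
  PowerSeries.mul_inv_cancel _ (by rw [constA]; exact one_ne_zero)

open PowerSeries in
lemma hA'u : rescale qv θ1ν * (rescale qv θ1ν)⁻¹ = 1 :=
  PowerSeries.mul_inv_cancel _ (by rw [constA']; exact one_ne_zero)

open PowerSeries in
lemma hresinv : rescale qv (θ1ν⁻¹) = (rescale qv θ1ν)⁻¹ := by
  have h2 : rescale qv θ1ν * rescale qv θ1ν⁻¹ = 1 := by
    rw [← map_mul, hAu, map_one]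
  calc rescale qv θ1ν⁻¹
      = rescale qv θ1ν⁻¹ * (rescale qv θ1ν * (rescale qv θ1ν)⁻¹) := by rw [hA'u, mul_one]
    _ = (rescale qv θ1ν * rescale qv θ1ν⁻¹) * (rescale qv θ1ν)⁻¹ := by ring
    _ = (rescale qv θ1ν)⁻¹ := by rw [h2, one_mul]

open PowerSeries in
lemma relR : C (1 - Qv * qv) * (θ1ν1 * θ1ν⁻¹)
    = C (1 - Qv * qv) * C (1 - Qv * qv)
      + C (Qv * qv) * C (1 - Qv * qv) * rescale qv (θ1ν1 * θ1ν⁻¹)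
      + C (Qv * qv) * C ((1 - qv) ^ 2)
          * (X * ((θ1ν1 * θ1ν⁻¹) * rescale qv (θ1ν1 * θ1ν⁻¹))) := by
  rw [map_mul (rescale qv) θ1ν1 θ1ν⁻¹, hresinv]
  set a := C (1 - Qv * qv)
  set b := C (Qv * qv)
  set c := C ((1 - qv) ^ 2)
  set A := θ1ν
  set B := θ1ν1
  set A' := rescale qv θ1ν
  set B' := rescale qv θ1ν1
  set u := θ1ν⁻¹
  set v := (rescale qv θ1ν)⁻¹
  have h1 : a * A = B - b * B' := relA
  have h2 : a * (A' - A) = c * (X * B) := relC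
  have hu : A * u = 1 := hAu
  have hv : A' * v = 1 := hA'u
  linear_combination (-(a * A' * u * v)) * h1 + (b * B' * u * v) * h2
    + (a * a * A' * v + a * b * B' * v) * hu + (a * a - a * B * u) * hv

open PowerSeries in
lemma Hrec (n : ℕ) : (1 - Qv * qv) * μ1 (n + 1)
    = Qv * qv * (1 - Qv * qv) * (qv ^ (n + 1) * μ1 (n + 1))
      + Qv * qv * (1 - qv) ^ 2
        * ∑ p ∈ Finset.HasAntidiagonal.antidiagonal n, μ1 p.1 * (qv ^ p.2 * μ1 p.2) := by
  have h := congrArg (coeff (n + 1)) relR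
  rw [mul_assoc (C (Qv * qv)) (C (1 - Qv * qv)),
    mul_assoc (C (Qv * qv)) (C ((1 - qv) ^ 2))] at h
  rw [coeff_C_mul, ← map_mul, map_add, map_add, coeff_C,
    if_neg (Nat.succ_ne_zero n), coeff_C_mul, coeff_C_mul, coeff_rescale,
    coeff_C_mul, coeff_C_mul, coeff_succ_X_mul,
    coeff_mul n (θ1ν1 * θ1ν⁻¹) ((rescale qv) (θ1ν1 * θ1ν⁻¹))] at h
  simp only [coeff_rescale] at h
  rw [show ∀ m, coeff m (θ1ν1 * θ1ν⁻¹) = μ1 m from fun _ => rfl] at h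
  simp only [show ∀ m, coeff m (θ1ν1 * θ1ν⁻¹) = μ1 m from fun _ => rfl] at h
  rw [h, zero_add]
  ring

lemma brk_mul (k : ℕ) : brk k * (1 - qv) = 1 - Qv * qv ^ k :=
  div_mul_cancel₀ _ hq_ne

lemma brNu_mul : brNu * (1 - qv) = 1 - Qv :=
  div_mul_cancel₀ _ hq_ne

lemma brk_eq (k : ℕ) : brk k = (∑ t ∈ Finset.range k, qv ^ t) + qv ^ k * brNu := by
  apply mul_right_cancel₀ hq_ne
  rw [brk_mul, add_mul, mul_assoc, brNu_mul]
  have h := geom_sum_mul qv k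
  linear_combination h

def S : Subalgebra ℕ K :=
  (MvPolynomial.aeval ![qv, Qv, brNu] : MvPolynomial (Fin 3) ℕ →ₐ[ℕ] K).range

lemma qv_mem : qv ∈ S := ⟨MvPolynomial.X 0, by simp⟩
lemma Qv_mem : Qv ∈ S := ⟨MvPolynomial.X 1, by simp⟩
lemma brNu_mem : brNu ∈ S := ⟨MvPolynomial.X 2, by simp [Matrix.cons_val_succ]⟩

lemma brk_mem (k : ℕ) : brk k ∈ S := by
  rw [brk_eq]
  exact add_mem (sum_mem fun t _ => pow_mem qv_mem t) (mul_mem (pow_mem qv_mem k) brNu_mem)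

lemma div_add_div_le (a b c : ℕ) (hc : 0 < c) : a / c + b / c ≤ (a + b) / c := by
  rw [Nat.le_div_iff_mul_le hc, add_mul]
  exact Nat.add_le_add (Nat.div_mul_le_self a c) (Nat.div_mul_le_self b c)

open PowerSeries in
lemma constB : PowerSeries.constantCoeff θ1ν1 = 1 := by
  rw [← PowerSeries.coeff_zero_eq_constantCoeff]
  simp [θ1ν1, qPoch]

lemma μ1_zero : μ1 0 = 1 := by
  show PowerSeries.coeff 0 (θ1ν1 * θ1ν⁻¹) = 1
  rw [PowerSeries.coeff_zero_eq_constantCoeff, map_mul, constB,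
    PowerSeries.constantCoeff_inv, constA, inv_one, one_mul]

lemma main_ind : ∀ n : ℕ, ∃ y ∈ S,
    μ1 n * ∏ k ∈ Finset.Icc 1 (n + 1), brk k ^ ((n + 1) / k) = (Qv * qv) ^ n * brk 1 * y := by
  intro n
  induction n using Nat.strong_induction_on with
  | _ n IH =>
    match n, IH with
    | 0, _ =>
      refine ⟨1, one_mem S, ?_⟩
      simp [μ1_zero, Finset.Icc_self]
    | (m + 1), IH =>
      set P1 : ℕ → K := fun t => ∏ k ∈ Finset.Icc 1 (m + 1), brk k ^ (t / k) with hP1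
      have hext : ∀ t, t ≤ m + 1 → (∏ k ∈ Finset.Icc 1 t, brk k ^ (t / k)) = P1 t := by
        intro t ht
        apply Finset.prod_subset (Finset.Icc_subset_Icc_right ht)
        intro k hk hkt
        have h1 : t < k := by
          simp only [Finset.mem_Icc] at hk hkt
          omega
        rw [Nat.div_eq_of_lt h1, pow_zero]
      have hfull : (∏ k ∈ Finset.Icc 1 (m + 2), brk k ^ ((m + 2) / k)) = P1 (m + 2) * brk (m + 2) := by
        rw [Finset.prod_Icc_succ_top (by omega)]
        congr 1
        rw [Nat.div_self (by omega), pow_one]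
      set E : ℕ → ℕ → K := fun i j =>
        ∏ k ∈ Finset.Icc 1 (m + 1), brk k ^ ((m + 2) / k - (i + 1) / k - (j + 1) / k) with hE
      have hES : ∀ i j, E i j ∈ S := fun i j => prod_mem fun k _ => pow_mem (brk_mem k) _
      have hsplit : ∀ i j : ℕ, i + j = m → P1 (m + 2) = P1 (i + 1) * P1 (j + 1) * E i j := by
        intro i j hij
        simp only [hE, hP1]
        rw [← Finset.prod_mul_distrib, ← Finset.prod_mul_distrib]
        apply Finset.prod_congr rfl
        intro k hk
        rw [← pow_add, ← pow_add]
        congr 1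
        have hk1 : 0 < k := by
          simp only [Finset.mem_Icc] at hk
          omega
        have h2 := div_add_div_le (i + 1) (j + 1) k hk1
        rw [show (i + 1) + (j + 1) = m + 2 by omega] at h2
        omega
      have hIH : ∀ i : ℕ, i ≤ m → ∃ y, y ∈ S ∧ μ1 i * P1 (i + 1) = (Qv * qv) ^ i * brk 1 * y := by
        intro i hi
        obtain ⟨y, hyS, hye⟩ := IH i (by omega)
        exact ⟨y, hyS, by rw [← hext (i + 1) (by omega)]; exact hye⟩
      choose Y hYS hYe using hIH
      set Z : ℕ → K := fun i => if h : i ≤ m then Y i h else 0 with hZ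
      have hZS : ∀ i, Z i ∈ S := by
        intro i
        by_cases h : i ≤ m
        · rw [hZ]; simp only [dif_pos h]; exact hYS i h
        · rw [hZ]; simp only [dif_neg h]; exact zero_mem S
      have hZe : ∀ i, i ≤ m → μ1 i * P1 (i + 1) = (Qv * qv) ^ i * brk 1 * Z i := by
        intro i h
        rw [hZ]; simp only [dif_pos h]; exact hYe i h
      refine ⟨∑ p ∈ Finset.HasAntidiagonal.antidiagonal m, qv ^ p.2 * (Z p.1 * Z p.2) * E p.1 p.2,
        sum_mem fun p _ => mul_mem (mul_mem (pow_mem qv_mem _) (mul_mem (hZS _) (hZS _))) (hES _ _),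
        ?_⟩
      set y : K := ∑ p ∈ Finset.HasAntidiagonal.antidiagonal m, qv ^ p.2 * (Z p.1 * Z p.2) * E p.1 p.2 with hy
      show μ1 (m + 1) * (∏ k ∈ Finset.Icc 1 (m + 2), brk k ^ ((m + 2) / k))
        = (Qv * qv) ^ (m + 1) * brk 1 * y
      rw [hfull]
      have hc : ((1 - Qv * qv) * (1 - Qv * qv ^ (m + 2))) ≠ 0 :=
        mul_ne_zero (by simpa using hQqp_ne 1) (hQqp_ne (m + 2))
      apply mul_left_cancel₀ hc
      have hterm : ∀ p ∈ Finset.HasAntidiagonal.antidiagonal m,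
          μ1 p.1 * (qv ^ p.2 * μ1 p.2) * P1 (m + 2)
            = (Qv * qv) ^ m * (brk 1 * brk 1) * (qv ^ p.2 * (Z p.1 * Z p.2) * E p.1 p.2) := by
        intro p hp
        have hij : p.1 + p.2 = m := Finset.HasAntidiagonal.mem_antidiagonal.mp hp
        have h1 : p.1 ≤ m := by omega
        have h2 : p.2 ≤ m := by omega
        rw [hsplit p.1 p.2 hij]
        have e1 := hZe p.1 h1
        have e2 := hZe p.2 h2
        rw [← hij, pow_add]
        linear_combination (qv ^ p.2 * μ1 p.2 * P1 (p.2 + 1) * E p.1 p.2) * e1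
          + ((Qv * qv) ^ p.1 * brk 1 * Z p.1 * qv ^ p.2 * E p.1 p.2) * e2
      calc (1 - Qv * qv) * (1 - Qv * qv ^ (m + 2)) * (μ1 (m + 1) * (P1 (m + 2) * brk (m + 2)))
          = (Qv * qv * (1 - qv) ^ 2
              * ∑ p ∈ Finset.HasAntidiagonal.antidiagonal m, μ1 p.1 * (qv ^ p.2 * μ1 p.2))
            * (P1 (m + 2) * brk (m + 2)) := by
            linear_combination (P1 (m + 2) * brk (m + 2)) * Hrec m
        _ = Qv * qv * (1 - qv) ^ 2 * brk (m + 2)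
            * ((∑ p ∈ Finset.HasAntidiagonal.antidiagonal m, μ1 p.1 * (qv ^ p.2 * μ1 p.2)) * P1 (m + 2)) := by
            ring
        _ = Qv * qv * (1 - qv) ^ 2 * brk (m + 2)
            * ∑ p ∈ Finset.HasAntidiagonal.antidiagonal m, μ1 p.1 * (qv ^ p.2 * μ1 p.2) * P1 (m + 2) := by
            rw [Finset.sum_mul]
        _ = Qv * qv * (1 - qv) ^ 2 * brk (m + 2)
            * ∑ p ∈ Finset.HasAntidiagonal.antidiagonal m,
                (Qv * qv) ^ m * (brk 1 * brk 1) * (qv ^ p.2 * (Z p.1 * Z p.2) * E p.1 p.2) := by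
            rw [Finset.sum_congr rfl hterm]
        _ = Qv * qv * (1 - qv) ^ 2 * brk (m + 2) * ((Qv * qv) ^ m * (brk 1 * brk 1) * y) := by
            rw [hy, ← Finset.mul_sum]
        _ = (1 - Qv * qv) * (1 - Qv * qv ^ (m + 2)) * ((Qv * qv) ^ (m + 1) * brk 1 * y) := by
            linear_combination ((Qv * qv) ^ m * (Qv * qv) * brk 1 * y * (1 - qv) * brk (m + 2)) * brk_mul 1
              + ((Qv * qv) ^ m * (Qv * qv) * brk 1 * y * (1 - Qv * qv)) * brk_mul (m + 2)


/-- Theorem 3.2, the `q`-Kishore theorem for Jackson's `q`-Bessel functions: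
`μ^{(1)}_n ∏_{k=1}^{n+1} [ν+k]_q^{⌊(n+1)/k⌋} = (Qq)^n [ν+1]_q P_n(q, Q, [ν]_q)` for a
polynomial `P_n` with nonnegative integer coefficients. -/
theorem q_kishore_jackson (n : ℕ) :
    ∃ P : MvPolynomial (Fin 3) ℕ,
      μ1 n * ∏ k ∈ Finset.Icc 1 (n + 1), brk k ^ ((n + 1) / k)
        = (Qv * qv) ^ n * brk 1 * MvPolynomial.aeval ![qv, Qv, brNu] P := by
  obtain ⟨y, ⟨P, hP⟩, he⟩ := main_ind n
  exact ⟨P, by rw [he, ← hP]; rfl⟩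

end
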